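/- Let x = (x₁, x₂)ᵀ ∈ 𝔽_q((T^{-1}))² with |x| = |x₂| > 0 and slope ξ = x₁/x₂ irrational with |ξ| ≤ 1, with convergents P_n/Q_n to ξ, and let y = (y₁, y₂)ᵀ ∈ 𝔽_q((T^{-1}))² with y₂ ≠ 0 and slope y₁/y₂ = A/B ∈ 𝔽_q(T) in lowest terms with |A/B| ≤ 1. Then for every index k with |Q_k| > |B·x₂/y₂|, every γ ∈ SL₂(𝔽_q[T]) with |γ| < |y₂·Q_k·Q_{k+1}/x₂| satisfies |γx − y| ≥ |x₂|/(|B|·|Q_k|). -/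

import Mathlib

open Polynomial Filter
open scoped Classical ENNReal

noncomputable section

variable (Fq : Type) [Field Fq] [Fintype Fq]

/-- The element `T` inside the Laurent-series field `𝔽_q((T⁻¹))`, which we realize
as the field of Hahn/Laurent series in the variable `T⁻¹`. -/
def Tel : LaurentSeries Fq := HahnSeries.single (-1 : ℤ) 1

/-- The inverse variable `T⁻¹` itself. -/
def TinvEl : LaurentSeries Fq := HahnSeries.single (1 : ℤ) 1

/-- The embedding of the polynomial ring `𝔽_q[T]` into `𝔽_q((T⁻¹))`,
sending `T` to `Tel`. -/
def polyToL (P : Polynomial Fq) : LaurentSeries Fq :=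
  Polynomial.eval₂ HahnSeries.C (Tel Fq) P

/-- The absolute value `|x| = q ^ (deg x)` on `𝔽_q((T⁻¹))`, with `|0| = 0`.
Here the degree of `x ≠ 0` is minus the order of `x` as a series in `T⁻¹`. -/
def labs (x : LaurentSeries Fq) : ℝ :=
  if x = 0 then 0 else (Fintype.card Fq : ℝ) ^ (-x.order)

/-- `‖x‖`: the distance from `x` to the nearest polynomial. -/
def lnorm (x : LaurentSeries Fq) : ℝ :=
  ⨅ P : Polynomial Fq, labs Fq (x - polyToL Fq P)

/-- `x ∈ 𝔽_q(T)`, i.e. `x` is rational. -/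
def IsRat (x : LaurentSeries Fq) : Prop :=
  ∃ P Q : Polynomial Fq, Q ≠ 0 ∧ polyToL Fq Q * x = polyToL Fq P


/-- `SL₂(𝔽_q[T])`. -/
abbrev SL2 := Matrix.SpecialLinearGroup (Fin 2) (Polynomial Fq)

/-- Maximum of the absolute values of the entries of a `2 × 2` matrix. -/
def matAbs (M : Matrix (Fin 2) (Fin 2) (LaurentSeries Fq)) : ℝ :=
  max (max (labs Fq (M 0 0)) (labs Fq (M 0 1))) (max (labs Fq (M 1 0)) (labs Fq (M 1 1)))

/-- The size `|γ|` of a matrix `γ ∈ SL₂(𝔽_q[T])`. -/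
def gabs (γ : SL2 Fq) : ℝ :=
  matAbs Fq (((γ : Matrix (Fin 2) (Fin 2) (Polynomial Fq))).map (polyToL Fq))

/-- Maximum of the absolute values of the coordinates of a vector. -/
def vabs (v : Fin 2 → LaurentSeries Fq) : ℝ :=
  max (labs Fq (v 0)) (labs Fq (v 1))

/-- The standard linear action of `SL₂(𝔽_q[T])` on `𝔽_q((T⁻¹))²`. -/
def act (γ : SL2 Fq) (v : Fin 2 → LaurentSeries Fq) : Fin 2 → LaurentSeries Fq :=
  (((γ : Matrix (Fin 2) (Fin 2) (Polynomial Fq))).map (polyToL Fq)).mulVec v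

/-- The asymptotic Diophantine exponent `μ(x, y)` (as an element of `ℝ≥0∞`). -/
def muExp (x y : Fin 2 → LaurentSeries Fq) : ℝ≥0∞ :=
  ⨆ m ∈ {m : ℝ |
      {γ : SL2 Fq | vabs Fq (act Fq γ x - y) ≤ gabs Fq γ ^ (-m)}.Infinite},
    ENNReal.ofReal m

/-- The uniform Diophantine exponent `μ̂(x, y)` (as an element of `ℝ≥0∞`). -/
def muHatExp (x y : Fin 2 → LaurentSeries Fq) : ℝ≥0∞ :=
  ⨆ m ∈ {m : ℝ | ∀ᶠ H : ℝ in atTop, ∃ γ : SL2 Fq,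
      gabs Fq γ ≤ H ∧ vabs Fq (act Fq γ x - y) ≤ H ^ (-m)},
    ENNReal.ofReal m

/-- The irrationality exponent `ω(ξ)` (as an element of `ℝ≥0∞`). -/
def omegaExp (ξ : LaurentSeries Fq) : ℝ≥0∞ :=
  ⨆ w ∈ {w : ℝ |
      {Q : Polynomial Fq | Q ≠ 0 ∧
        lnorm Fq (polyToL Fq Q * ξ) ≤ labs Fq (polyToL Fq Q) ^ (-w)}.Infinite},
    ENNReal.ofReal w

/-- Numerators `P_n` of the continued-fraction convergents associated with
partial quotients `C 0 = A₀, C 1 = A₁, …`; indices are shifted by `2`, so that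
`cfNum C 0 = P₋₂ = 0`, `cfNum C 1 = P₋₁ = 1`, and `cfNum C (n + 2) = Pₙ`. -/
def cfNum (C : ℕ → Polynomial Fq) : ℕ → Polynomial Fq
  | 0 => 0
  | 1 => 1
  | n + 2 => C n * cfNum C (n + 1) + cfNum C n

/-- Denominators `Q_n` of the continued-fraction convergents, with
`cfDen C 0 = Q₋₂ = 1`, `cfDen C 1 = Q₋₁ = 0`, and `cfDen C (n + 2) = Qₙ`. -/
def cfDen (C : ℕ → Polynomial Fq) : ℕ → Polynomial Fq
  | 0 => 1
  | 1 => 0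
  | n + 2 => C n * cfDen C (n + 1) + cfDen C n

/-- `ξ` has continued-fraction expansion `[C 0; C 1, C 2, …]`, expressed by the
characteristic property `|Qₙ ξ − Pₙ| = |Q_{n+1}|⁻¹` of the convergents. -/
def HasCF (ξ : LaurentSeries Fq) (C : ℕ → Polynomial Fq) : Prop :=
  ∀ n : ℕ, labs Fq (polyToL Fq (cfDen Fq C (n + 2)) * ξ - polyToL Fq (cfNum Fq C (n + 2)))
    = (labs Fq (polyToL Fq (cfDen Fq C (n + 3))))⁻¹

/-- The convergent matrix `M_k` with rows `(Q_k, −P_k)` and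
`((−1)^(k−1) Q_{k−1}, (−1)^k P_{k−1})`. -/
def cfM (C : ℕ → Polynomial Fq) (k : ℕ) : Matrix (Fin 2) (Fin 2) (Polynomial Fq) :=
  !![cfDen Fq C (k + 2), -cfNum Fq C (k + 2);
     (-1 : Polynomial Fq) ^ (k + 1) * cfDen Fq C (k + 1), (-1 : Polynomial Fq) ^ k * cfNum Fq C (k + 1)]

/-- The unipotent matrix `U(a)`. -/
def Umat (a : Polynomial Fq) : Matrix (Fin 2) (Fin 2) (Polynomial Fq) :=
  !![1, a; 0, 1]


lemma my_q1 : (1:ℝ) < Fintype.card Fq := by exact_mod_cast Fintype.one_lt_card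
lemma my_q0 : (0:ℝ) < Fintype.card Fq := lt_trans one_pos (my_q1 Fq)

lemma labs_zero : labs Fq 0 = 0 := if_pos rfl

lemma labs_of_ne {x : LaurentSeries Fq} (h : x ≠ 0) :
    labs Fq x = (Fintype.card Fq : ℝ) ^ (-x.order) := if_neg h

lemma labs_nonneg (x : LaurentSeries Fq) : 0 ≤ labs Fq x := by
  by_cases h : x = 0
  · simp [h, labs_zero]
  · rw [labs_of_ne Fq h]; positivity

lemma labs_pos {x : LaurentSeries Fq} (h : x ≠ 0) : 0 < labs Fq x := by
  rw [labs_of_ne Fq h]; positivity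

lemma labs_ne_zero {x : LaurentSeries Fq} (h : x ≠ 0) : labs Fq x ≠ 0 :=
  ne_of_gt (labs_pos Fq h)

lemma labs_one : labs Fq 1 = 1 := by
  rw [labs_of_ne Fq one_ne_zero, HahnSeries.order_one]; simp

lemma labs_mul (x y : LaurentSeries Fq) : labs Fq (x * y) = labs Fq x * labs Fq y := by
  by_cases hx : x = 0
  · simp [hx, labs_zero]
  by_cases hy : y = 0
  · simp [hy, labs_zero]
  rw [labs_of_ne Fq (mul_ne_zero hx hy), labs_of_ne Fq hx, labs_of_ne Fq hy,
    HahnSeries.order_mul hx hy, neg_add, zpow_add₀ (ne_of_gt (my_q0 Fq))]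

lemma labs_neg (x : LaurentSeries Fq) : labs Fq (-x) = labs Fq x := by
  by_cases hx : x = 0
  · simp [hx]
  · rw [labs_of_ne Fq (neg_ne_zero.mpr hx), labs_of_ne Fq hx, HahnSeries.order_neg]

lemma labs_add_le (x y : LaurentSeries Fq) :
    labs Fq (x + y) ≤ max (labs Fq x) (labs Fq y) := by
  by_cases hx : x = 0
  · simp [hx, le_max_iff, le_refl]
  by_cases hy : y = 0
  · simp [hy, le_max_iff, le_refl]
  by_cases hxy : x + y = 0
  · rw [hxy, labs_zero]
    exact le_max_of_le_left (labs_nonneg Fq x)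
  rw [labs_of_ne Fq hxy, labs_of_ne Fq hx, labs_of_ne Fq hy]
  have h := HahnSeries.min_order_le_order_add hxy
  rcases min_le_iff.mp h with h' | h'
  · exact le_max_of_le_left (zpow_le_zpow_right₀ (le_of_lt (my_q1 Fq)) (neg_le_neg h'))
  · exact le_max_of_le_right (zpow_le_zpow_right₀ (le_of_lt (my_q1 Fq)) (neg_le_neg h'))

lemma labs_add_eq_left {x y : LaurentSeries Fq} (h : labs Fq y < labs Fq x) :
    labs Fq (x + y) = labs Fq x := by
  have h1 : labs Fq (x + y) ≤ labs Fq x := by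
    simpa [le_of_lt h, max_eq_left] using labs_add_le Fq x y
  refine le_antisymm h1 ?_
  have h2 : labs Fq x ≤ max (labs Fq (x + y)) (labs Fq y) := by
    have := labs_add_le Fq (x + y) (-y)
    simpa [labs_neg] using this
  rcases max_cases (labs Fq (x + y)) (labs Fq y) with ⟨he, _⟩ | ⟨he, _⟩
  · rw [he] at h2; exact h2
  · rw [he] at h2; exact absurd h (not_lt_of_ge h2)

lemma labs_inv (x : LaurentSeries Fq) : labs Fq x⁻¹ = (labs Fq x)⁻¹ := by
  by_cases hx : x = 0
  · simp [hx, labs_zero]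
  have : x⁻¹ * x = 1 := inv_mul_cancel₀ hx
  have h2 := labs_mul Fq x⁻¹ x
  rw [this, labs_one] at h2
  exact eq_inv_of_mul_eq_one_left h2.symm

lemma labs_div (x y : LaurentSeries Fq) : labs Fq (x / y) = labs Fq x / labs Fq y := by
  rw [div_eq_mul_inv, labs_mul, labs_inv, div_eq_mul_inv]

lemma hahn_sum_coeff {ι : Type*} (s : Finset ι) (f : ι → LaurentSeries Fq) (n : ℤ) :
    (∑ i ∈ s, f i).coeff n = ∑ i ∈ s, (f i).coeff n := by
  classical
  induction s using Finset.induction_on with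
  | empty => simp
  | insert a s h ih => rw [Finset.sum_insert h, Finset.sum_insert h, HahnSeries.coeff_add, ih]

lemma Tel_pow (n : ℕ) : (Tel Fq) ^ n = HahnSeries.single (-(n : ℤ)) (1 : Fq) := by
  induction n with
  | zero => simp [HahnSeries.single_zero_one]
  | succ m ih =>
    rw [pow_succ, ih, Tel, HahnSeries.single_mul_single, mul_one]
    congr 1
    push_cast
    ring

lemma polyToL_coeff (P : Polynomial Fq) (n : ℤ) :
    (polyToL Fq P).coeff n = if n ≤ 0 then P.coeff (-n).toNat else 0 := by
  rw [polyToL, Polynomial.eval₂_eq_sum_range]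
  rw [hahn_sum_coeff]
  have hterm : ∀ i : ℕ, (HahnSeries.C (P.coeff i) * (Tel Fq) ^ i).coeff n
      = if n = -(i : ℤ) then P.coeff i else 0 := by
    intro i
    simp [Tel_pow, HahnSeries.C_apply, HahnSeries.single_mul_single,
      HahnSeries.coeff_single]
  simp only [hterm]
  by_cases hn : n ≤ 0
  · rw [if_pos hn]
    have hstep : ∀ i ∈ Finset.range (P.natDegree + 1),
        (if n = -(i : ℤ) then P.coeff i else 0)
          = if i = (-n).toNat then P.coeff i else 0 := by
      intro i _
      by_cases h : i = (-n).toNat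
      · rw [if_pos h, if_pos (by omega)]
      · rw [if_neg h, if_neg (by omega)]
    rw [Finset.sum_congr rfl hstep, Finset.sum_ite_eq' (Finset.range (P.natDegree + 1))]
    by_cases hmem : (-n).toNat ∈ Finset.range (P.natDegree + 1)
    · rw [if_pos hmem]
    · rw [if_neg hmem, eq_comm]
      apply Polynomial.coeff_eq_zero_of_natDegree_lt
      simp only [Finset.mem_range] at hmem
      omega
  · rw [if_neg hn]
    apply Finset.sum_eq_zero
    intro i _
    rw [if_neg]
    omega

lemma polyToL_ne_zero {P : Polynomial Fq} (hP : P ≠ 0) : polyToL Fq P ≠ 0 := by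
  intro h
  have := polyToL_coeff Fq P (-(P.natDegree : ℤ))
  rw [h] at this
  simp only [HahnSeries.coeff_zero, neg_neg, Int.toNat_natCast] at this
  rw [if_pos (by omega)] at this
  exact Polynomial.leadingCoeff_ne_zero.mpr hP this.symm

lemma polyToL_order {P : Polynomial Fq} (hP : P ≠ 0) :
    (polyToL Fq P).order = -(P.natDegree : ℤ) := by
  refine le_antisymm ?_ ?_
  · apply HahnSeries.order_le_of_coeff_ne_zero
    rw [polyToL_coeff, if_pos (by omega)]
    simp only [neg_neg, Int.toNat_natCast]
    exact Polynomial.leadingCoeff_ne_zero.mpr hP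
  · by_contra h
    push_neg at h
    have h1 := HahnSeries.coeff_orderTop_ne (HahnSeries.order_eq_orderTop_of_ne_zero (polyToL_ne_zero Fq hP)).symm
    rw [polyToL_coeff, if_pos (by omega)] at h1
    exact h1 (Polynomial.coeff_eq_zero_of_natDegree_lt (by omega))

lemma labs_polyToL {P : Polynomial Fq} (hP : P ≠ 0) :
    labs Fq (polyToL Fq P) = (Fintype.card Fq : ℝ) ^ (P.natDegree : ℤ) := by
  rw [labs_of_ne Fq (polyToL_ne_zero Fq hP), polyToL_order Fq hP, neg_neg]

lemma one_le_labs_polyToL {P : Polynomial Fq} (hP : P ≠ 0) :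
    1 ≤ labs Fq (polyToL Fq P) := by
  rw [labs_polyToL Fq hP]
  exact one_le_zpow₀ (le_of_lt (my_q1 Fq)) (by positivity)

lemma card_le_labs_polyToL {P : Polynomial Fq} (hP : 0 < P.natDegree) :
    (Fintype.card Fq : ℝ) ≤ labs Fq (polyToL Fq P) := by
  have hP0 : P ≠ 0 := fun h => by simp [h] at hP
  rw [labs_polyToL Fq hP0]
  calc (Fintype.card Fq : ℝ) = (Fintype.card Fq : ℝ) ^ (1 : ℤ) := by simp
    _ ≤ _ := zpow_le_zpow_right₀ (le_of_lt (my_q1 Fq)) (by omega)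

lemma polyToL_mul (P Q : Polynomial Fq) :
    polyToL Fq (P * Q) = polyToL Fq P * polyToL Fq Q := Polynomial.eval₂_mul _ _

lemma polyToL_add (P Q : Polynomial Fq) :
    polyToL Fq (P + Q) = polyToL Fq P + polyToL Fq Q := Polynomial.eval₂_add _ _

lemma polyToL_one : polyToL Fq 1 = 1 := Polynomial.eval₂_one _ _

lemma polyToL_zero : polyToL Fq 0 = 0 := Polynomial.eval₂_zero _ _

lemma polyToL_neg (P : Polynomial Fq) : polyToL Fq (-P) = -polyToL Fq P := by
  have := polyToL_add Fq P (-P)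
  simp only [add_neg_cancel, polyToL_zero] at this
  exact (neg_eq_of_add_eq_zero_right this.symm).symm

lemma cfDen_grow (C : ℕ → Polynomial Fq) (hdeg : ∀ i, 1 ≤ i → 0 < (C i).natDegree) :
    ∀ n : ℕ, cfDen Fq C (n + 2) ≠ 0 ∧
      labs Fq (polyToL Fq (cfDen Fq C (n + 2))) < labs Fq (polyToL Fq (cfDen Fq C (n + 3))) := by
  intro n
  induction n with
  | zero =>
    have h2 : cfDen Fq C 2 = 1 := by show C 0 * cfDen Fq C 1 + cfDen Fq C 0 = 1; show C 0 * 0 + 1 = 1; ring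
    have h3 : cfDen Fq C 3 = C 1 := by show C 1 * cfDen Fq C 2 + cfDen Fq C 1 = C 1; rw [h2]; show C 1 * 1 + 0 = C 1; ring
    refine ⟨by rw [h2]; exact one_ne_zero, ?_⟩
    rw [h2, h3, polyToL_one, labs_one]
    exact lt_of_lt_of_le (my_q1 Fq) (card_le_labs_polyToL Fq (hdeg 1 le_rfl))
  | succ m ih =>
    obtain ⟨hne, hlt⟩ := ih
    have hpos2 : 0 < labs Fq (polyToL Fq (cfDen Fq C (m + 2))) :=
      labs_pos Fq (polyToL_ne_zero Fq hne)
    have hne3 : cfDen Fq C (m + 3) ≠ 0 := by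
      intro h
      rw [h, polyToL_zero, labs_zero] at hlt
      linarith
    refine ⟨hne3, ?_⟩
    have hrec : cfDen Fq C (m + 4) = C (m + 2) * cfDen Fq C (m + 3) + cfDen Fq C (m + 2) := rfl
    have hCne : C (m + 2) ≠ 0 := by
      intro h
      have := hdeg (m + 2) (by omega)
      rw [h] at this
      simp at this
    have hkey : labs Fq (polyToL Fq (cfDen Fq C (m + 2)))
        < labs Fq (polyToL Fq (C (m + 2)) * polyToL Fq (cfDen Fq C (m + 3))) := by
      rw [labs_mul]
      calc labs Fq (polyToL Fq (cfDen Fq C (m + 2)))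
          < labs Fq (polyToL Fq (cfDen Fq C (m + 3))) := hlt
        _ = 1 * labs Fq (polyToL Fq (cfDen Fq C (m + 3))) := (one_mul _).symm
        _ ≤ _ := by
            apply mul_le_mul_of_nonneg_right (one_le_labs_polyToL Fq hCne) (labs_nonneg Fq _)
    rw [hrec, polyToL_add, polyToL_mul, labs_add_eq_left Fq hkey, labs_mul]
    calc labs Fq (polyToL Fq (cfDen Fq C (m + 3)))
        = 1 * labs Fq (polyToL Fq (cfDen Fq C (m + 3))) := (one_mul _).symm
      _ < _ := by
          apply mul_lt_mul_of_pos_right _ (labs_pos Fq (polyToL_ne_zero Fq hne3))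
          exact lt_of_lt_of_le (my_q1 Fq) (card_le_labs_polyToL Fq (hdeg (m + 2) (by omega)))

lemma cf_det (C : ℕ → Polynomial Fq) (n : ℕ) :
    cfNum Fq C n * cfDen Fq C (n + 1) - cfNum Fq C (n + 1) * cfDen Fq C n
      = (-1 : Polynomial Fq) ^ (n + 1) := by
  induction n with
  | zero =>
    show (0 : Polynomial Fq) * 0 - 1 * 1 = (-1) ^ 1
    ring
  | succ m ih =>
    have e1 : cfNum Fq C (m + 2) = C m * cfNum Fq C (m + 1) + cfNum Fq C m := rfl
    have e2 : cfDen Fq C (m + 2) = C m * cfDen Fq C (m + 1) + cfDen Fq C m := rfl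
    rw [e1, e2, pow_succ]
    rw [← ih]
    ring

lemma polyToL_sub (P Q : Polynomial Fq) :
    polyToL Fq (P - Q) = polyToL Fq P - polyToL Fq Q := by
  rw [sub_eq_add_neg, polyToL_add, polyToL_neg, sub_eq_add_neg]

lemma labs_sub_le (x y : LaurentSeries Fq) :
    labs Fq (x - y) ≤ max (labs Fq x) (labs Fq y) := by
  rw [sub_eq_add_neg]
  simpa [labs_neg] using labs_add_le Fq x (-y)

lemma labs_add_of_ne {x y : LaurentSeries Fq} (h : labs Fq x ≠ labs Fq y) :
    labs Fq (x + y) = max (labs Fq x) (labs Fq y) := by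
  rcases lt_or_gt_of_ne h with h' | h'
  · rw [add_comm, labs_add_eq_left Fq h', max_eq_right (le_of_lt h')]
  · rw [labs_add_eq_left Fq h', max_eq_left (le_of_lt h')]

lemma cramer2 {R : Type*} [CommRing R] (P0 Q0 P1 Q1 e f d : R)
    (hd : d = P0 * Q1 - P1 * Q0) (h1 : d * d = 1) :
    (d * (-P1 * e - Q1 * f)) * Q0 + (d * (P0 * e + Q0 * f)) * Q1 = e ∧
      -((d * (-P1 * e - Q1 * f)) * P0) - (d * (P0 * e + Q0 * f)) * P1 = f := by
  subst hd
  constructor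
  · linear_combination e * h1
  · linear_combination f * h1


/-- **Inhomogeneous gap theorem for rational-slope targets.** -/
theorem stmt18 (x : Fin 2 → LaurentSeries Fq) (hx2 : x 1 ≠ 0)
    (hxmax : labs Fq (x 0) ≤ labs Fq (x 1))
    (hξirr : ¬ IsRat Fq (x 0 / x 1)) (hξ1 : labs Fq (x 0 / x 1) ≤ 1)
    (C : ℕ → Polynomial Fq) (hdeg : ∀ i, 1 ≤ i → 0 < (C i).natDegree)
    (hcf : HasCF Fq (x 0 / x 1) C)
    (y : Fin 2 → LaurentSeries Fq) (hy2 : y 1 ≠ 0)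
    (A B : Polynomial Fq) (hB : B ≠ 0) (hcop : IsCoprime A B)
    (hAB : labs Fq (polyToL Fq A / polyToL Fq B) ≤ 1)
    (hslope : y 0 / y 1 = polyToL Fq A / polyToL Fq B)
    (k : ℕ)
    (hk : labs Fq (polyToL Fq B * x 1 / y 1) < labs Fq (polyToL Fq (cfDen Fq C (k + 2))))
    (γ : SL2 Fq)
    (hγ : gabs Fq γ <
      labs Fq (y 1 * polyToL Fq (cfDen Fq C (k + 2)) * polyToL Fq (cfDen Fq C (k + 3)) / x 1)) :
    labs Fq (x 1) / (labs Fq (polyToL Fq B) * labs Fq (polyToL Fq (cfDen Fq C (k + 2))))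
      ≤ vabs Fq (act Fq γ x - y) := by
  by_contra hcon
  push_neg at hcon
  -- polynomial entries of γ
  set g00 := (γ : Matrix (Fin 2) (Fin 2) (Polynomial Fq)) 0 0 with hg00
  set g01 := (γ : Matrix (Fin 2) (Fin 2) (Polynomial Fq)) 0 1 with hg01
  set g10 := (γ : Matrix (Fin 2) (Fin 2) (Polynomial Fq)) 1 0 with hg10
  set g11 := (γ : Matrix (Fin 2) (Fin 2) (Polynomial Fq)) 1 1 with hg11
  have hdetp : g00 * g11 - g01 * g10 = 1 := by
    have := γ.prop
    rwa [Matrix.det_fin_two] at this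
  -- Laurent series versions
  set pa := polyToL Fq g00 with hpa
  set pb := polyToL Fq g01 with hpb
  set pc := polyToL Fq g10 with hpc
  set pd := polyToL Fq g11 with hpd
  set pA := polyToL Fq A with hpA
  set pB := polyToL Fq B with hpB
  set pP0 := polyToL Fq (cfNum Fq C (k + 2)) with hpP0
  set pP1 := polyToL Fq (cfNum Fq C (k + 3)) with hpP1
  set pQ0 := polyToL Fq (cfDen Fq C (k + 2)) with hpQ0
  set pQ1 := polyToL Fq (cfDen Fq C (k + 3)) with hpQ1
  set pQ2 := polyToL Fq (cfDen Fq C (k + 4)) with hpQ2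
  -- real quantities
  set X2 := labs Fq (x 1) with hX2def
  set Y2 := labs Fq (y 1) with hY2def
  set Bb := labs Fq pB with hBbdef
  set Qd0 := labs Fq pQ0 with hQd0def
  set Qd1 := labs Fq pQ1 with hQd1def
  set Qd2 := labs Fq pQ2 with hQd2def
  have hX2 : 0 < X2 := labs_pos Fq hx2
  have hY2 : 0 < Y2 := labs_pos Fq hy2
  have hpBne : pB ≠ 0 := polyToL_ne_zero Fq hB
  have hBb1 : 1 ≤ Bb := one_le_labs_polyToL Fq hB
  have hBb : 0 < Bb := lt_of_lt_of_le one_pos hBb1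
  obtain ⟨hD0ne, hQ01⟩ := cfDen_grow Fq C hdeg k
  obtain ⟨hD1ne, hQ12⟩ := cfDen_grow Fq C hdeg (k + 1)
  obtain ⟨hD2ne, _⟩ := cfDen_grow Fq C hdeg (k + 2)
  have hQd0_1 : 1 ≤ Qd0 := one_le_labs_polyToL Fq hD0ne
  have hQd0 : 0 < Qd0 := lt_of_lt_of_le one_pos hQd0_1
  have hQd1 : 0 < Qd1 := lt_trans hQd0 hQ01
  have hQd2 : 0 < Qd2 := lt_trans hQd1 hQ12
  have hQ02 : Qd0 < Qd2 := lt_trans hQ01 hQ12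
  -- the slack ε
  set ε := X2 / (Bb * Qd0) with hεdef
  have hε : 0 < ε := by positivity
  -- hcon in terms of ε
  have hη0 : labs Fq (act Fq γ x 0 - y 0) < ε := by
    refine lt_of_le_of_lt ?_ hcon
    exact le_max_left _ _
  have hη1 : labs Fq (act Fq γ x 1 - y 1) < ε := by
    refine lt_of_le_of_lt ?_ hcon
    exact le_max_right _ _
  -- rewrite hγ and hk
  have hγ' : gabs Fq γ < Y2 * Qd0 * Qd1 / X2 := by
    rwa [labs_div, labs_mul, labs_mul] at hγ
  have hk' : Bb * X2 / Y2 < Qd0 := by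
    rwa [labs_div, labs_mul] at hk
  -- entry bounds
  have hgabs : gabs Fq γ = max (max (labs Fq pa) (labs Fq pb)) (max (labs Fq pc) (labs Fq pd)) := rfl
  have hpa_le : labs Fq pa ≤ gabs Fq γ := by rw [hgabs]; exact le_max_of_le_left (le_max_left _ _)
  have hpb_le : labs Fq pb ≤ gabs Fq γ := by rw [hgabs]; exact le_max_of_le_left (le_max_right _ _)
  have hpc_le : labs Fq pc ≤ gabs Fq γ := by rw [hgabs]; exact le_max_of_le_right (le_max_left _ _)
  have hpd_le : labs Fq pd ≤ gabs Fq γ := by rw [hgabs]; exact le_max_of_le_right (le_max_right _ _)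
  have hgabs0 : 0 ≤ gabs Fq γ := le_trans (labs_nonneg Fq pa) hpa_le
  -- act expansion
  have hz0 : act Fq γ x 0 = pa * x 0 + pb * x 1 := by
    simp [act, Matrix.mulVec, dotProduct, Fin.sum_univ_two, Matrix.map_apply,
      hpa, hpb, hg00, hg01]
  have hz1 : act Fq γ x 1 = pc * x 0 + pd * x 1 := by
    simp [act, Matrix.mulVec, dotProduct, Fin.sum_univ_two, Matrix.map_apply,
      hpc, hpd, hg10, hg11]
  -- slope of y
  have hBy : pB * y 0 = pA * y 1 := by
    have h := hslope
    field_simp at h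
    linear_combination h
  have hAle : labs Fq pA ≤ Bb := by
    rw [labs_div] at hAB
    calc labs Fq pA = labs Fq pA / Bb * Bb := by field_simp
      _ ≤ 1 * Bb := mul_le_mul_of_nonneg_right hAB (le_of_lt hBb)
      _ = Bb := one_mul _
  -- the vector (e, f) = (B, -A) γ
  set e := B * g00 - A * g10 with hedef
  set f := B * g01 - A * g11 with hfdef
  set pe := polyToL Fq e with hpe
  set pf := polyToL Fq f with hpf
  have hpe_eq : pe = pB * pa - pA * pc := by
    rw [hpe, hedef, polyToL_sub, polyToL_mul, polyToL_mul]
  have hpf_eq : pf = pB * pb - pA * pd := by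
    rw [hpf, hfdef, polyToL_sub, polyToL_mul, polyToL_mul]
  -- Claim 1 : e x₀ + f x₁ = B η₀ - A η₁
  have claim1 : pe * x 0 + pf * x 1
      = pB * (act Fq γ x 0 - y 0) - pA * (act Fq γ x 1 - y 1) := by
    rw [hpe_eq, hpf_eq, hz0, hz1]
    linear_combination hBy
  -- Estimate 1 : |e x₀ + f x₁| < X2 / Qd0
  have est1 : labs Fq (pe * x 0 + pf * x 1) < X2 / Qd0 := by
    rw [claim1]
    refine lt_of_le_of_lt (labs_sub_le Fq _ _) (max_lt ?_ ?_)
    · rw [labs_mul]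
      calc Bb * labs Fq (act Fq γ x 0 - y 0) < Bb * ε := by
            exact mul_lt_mul_of_pos_left hη0 hBb
        _ = X2 / Qd0 := by rw [hεdef]; field_simp
    · rw [labs_mul]
      calc labs Fq pA * labs Fq (act Fq γ x 1 - y 1)
          ≤ Bb * labs Fq (act Fq γ x 1 - y 1) :=
            mul_le_mul_of_nonneg_right hAle (labs_nonneg Fq _)
        _ < Bb * ε := mul_lt_mul_of_pos_left hη1 hBb
        _ = X2 / Qd0 := by rw [hεdef]; field_simp
  -- Estimate: |e| < Qd1, via x₁ = -c z₀ + a z₁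
  have hd : pa * pd - pb * pc = 1 := by
    have := congrArg (polyToL Fq) hdetp
    rw [polyToL_sub, polyToL_mul, polyToL_mul, polyToL_one] at this
    linear_combination this
  have hrho : labs Fq (pa * (act Fq γ x 1 - y 1) - pc * (act Fq γ x 0 - y 0))
      < Y2 * Qd1 / Bb := by
    have hbound : ∀ u v : LaurentSeries Fq, labs Fq u ≤ gabs Fq γ → labs Fq v < ε →
        labs Fq (u * v) < Y2 * Qd1 / Bb := by
      intro u v hu hv
      rw [labs_mul]
      calc labs Fq u * labs Fq v ≤ gabs Fq γ * labs Fq v :=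
            mul_le_mul_of_nonneg_right hu (labs_nonneg Fq _)
        _ ≤ gabs Fq γ * ε := mul_le_mul_of_nonneg_left (le_of_lt hv) hgabs0
        _ < (Y2 * Qd0 * Qd1 / X2) * ε := mul_lt_mul_of_pos_right hγ' hε
        _ = Y2 * Qd1 / Bb := by rw [hεdef]; field_simp
    refine lt_of_le_of_lt (labs_sub_le Fq _ _) (max_lt ?_ ?_)
    · exact hbound _ _ hpa_le hη1
    · exact hbound _ _ hpc_le hη0
  have hpe_lt : labs Fq pe < Qd1 := by
    have hkey : pe * (y 1) = pB * (x 1) -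
        pB * (pa * (act Fq γ x 1 - y 1) - pc * (act Fq γ x 0 - y 0)) := by
      rw [hpe_eq, hz0, hz1]
      linear_combination pc * hBy + (pB * x 1) * hd
    have hls : labs Fq (pe * y 1) = labs Fq pe * Y2 := by rw [labs_mul]
    have hrhs : labs Fq (pe * y 1) < Qd1 * Y2 := by
      rw [hkey]
      refine lt_of_le_of_lt (labs_sub_le Fq _ _) (max_lt ?_ ?_)
      · rw [labs_mul]
        calc Bb * X2 < Qd0 * Y2 := by
              rw [div_lt_iff₀ hY2] at hk'
              linarith
          _ ≤ Qd1 * Y2 := mul_le_mul_of_nonneg_right (le_of_lt hQ01) (le_of_lt hY2)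
      · rw [labs_mul]
        calc Bb * labs Fq (pa * (act Fq γ x 1 - y 1) - pc * (act Fq γ x 0 - y 0))
            < Bb * (Y2 * Qd1 / Bb) := mul_lt_mul_of_pos_left hrho hBb
          _ = Qd1 * Y2 := by field_simp
    rw [hls] at hrhs
    exact lt_of_mul_lt_mul_right (by linarith) (le_of_lt hY2)
  -- decomposition in the convergent basis
  have hdd1 : (cfNum Fq C (k + 2) * cfDen Fq C (k + 3) - cfNum Fq C (k + 3) * cfDen Fq C (k + 2))
      * (cfNum Fq C (k + 2) * cfDen Fq C (k + 3) - cfNum Fq C (k + 3) * cfDen Fq C (k + 2)) = 1 := by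
    rw [cf_det Fq C (k + 2), ← pow_add]
    exact Even.neg_one_pow ⟨k + 3, by ring⟩
  obtain ⟨s, t, hse, hsf⟩ : ∃ s t : Polynomial Fq,
      s * cfDen Fq C (k + 2) + t * cfDen Fq C (k + 3) = e ∧
      -(s * cfNum Fq C (k + 2)) - t * cfNum Fq C (k + 3) = f := by
    obtain ⟨h1, h2⟩ := cramer2 (cfNum Fq C (k + 2)) (cfDen Fq C (k + 2)) (cfNum Fq C (k + 3))
      (cfDen Fq C (k + 3)) e f _ rfl hdd1
    exact ⟨_, _, h1, h2⟩
  set ps := polyToL Fq s with hps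
  set pt := polyToL Fq t with hpt
  have hseL : ps * pQ0 + pt * pQ1 = pe := by
    have h := congrArg (polyToL Fq) hse
    rwa [polyToL_add, polyToL_mul, polyToL_mul] at h
  have hsfL : -(ps * pP0) - pt * pP1 = pf := by
    have h := congrArg (polyToL Fq) hsf
    rwa [polyToL_sub, polyToL_neg, polyToL_mul, polyToL_mul] at h
  set ξ := x 0 / x 1 with hξdef
  have hx0 : x 0 = ξ * x 1 := by rw [hξdef]; field_simp
  set δ0 := pQ0 * ξ - pP0 with hδ0def
  set δ1 := pQ1 * ξ - pP1 with hδ1def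
  have hδ0 : labs Fq δ0 = Qd1⁻¹ := hcf k
  have hδ1 : labs Fq δ1 = Qd2⁻¹ := hcf (k + 1)
  have hW : pe * x 0 + pf * x 1 = x 1 * (ps * δ0 + pt * δ1) := by
    rw [← hseL, ← hsfL, hδ0def, hδ1def, hx0]
    ring
  by_cases ht0 : t = 0
  · -- case t = 0
    rw [ht0] at hse hsf
    simp only [zero_mul, add_zero, mul_zero, sub_zero] at hse hsf
    set m := g10 * cfNum Fq C (k + 2) + g11 * cfDen Fq C (k + 2) with hm_def
    have hsm : s * m = B := by
      rw [hm_def]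
      linear_combination g11 * hse - g10 * hsf + g11 * hedef - g10 * hfdef + B * hdetp
    have hsne : s ≠ 0 := by
      rintro rfl
      rw [zero_mul] at hsm
      exact hB hsm.symm
    set pm := polyToL Fq m with hpm
    have hpm_le : labs Fq pm ≤ Bb := by
      have h := congrArg (polyToL Fq) hsm
      rw [polyToL_mul] at h
      have h1 : labs Fq (polyToL Fq s) * labs Fq pm = Bb := by
        rw [hpm, ← labs_mul, h, ← hpB, hBbdef]
      calc labs Fq pm = 1 * labs Fq pm := (one_mul _).symm
        _ ≤ labs Fq (polyToL Fq s) * labs Fq pm :=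
            mul_le_mul_of_nonneg_right (one_le_labs_polyToL Fq hsne) (labs_nonneg Fq pm)
        _ = Bb := h1
    have hpm_eq : pm = pc * pP0 + pd * pQ0 := by
      rw [hpm, hm_def, polyToL_add, polyToL_mul, polyToL_mul]
    have hfin : pQ0 * (y 1) = x 1 * pc * δ0 + x 1 * pm - pQ0 * (act Fq γ x 1 - y 1) := by
      rw [hpm_eq, hδ0def, hz1, hx0]
      ring
    have hb1 : labs Fq (x 1 * pc * δ0) < Qd0 * Y2 := by
      rw [labs_mul, labs_mul, hδ0]
      have h1 : labs Fq pc < Y2 * Qd0 * Qd1 / X2 := lt_of_le_of_lt hpc_le hγ'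
      have h2 : X2 * labs Fq pc < Y2 * Qd0 * Qd1 := by
        calc X2 * labs Fq pc < X2 * (Y2 * Qd0 * Qd1 / X2) := mul_lt_mul_of_pos_left h1 hX2
          _ = Y2 * Qd0 * Qd1 := by field_simp
      calc X2 * labs Fq pc * Qd1⁻¹ < (Y2 * Qd0 * Qd1) * Qd1⁻¹ :=
            mul_lt_mul_of_pos_right h2 (inv_pos.mpr hQd1)
        _ = Qd0 * Y2 := by field_simp
    have hBX : Bb * X2 < Qd0 * Y2 := by
      rw [div_lt_iff₀ hY2] at hk'
      linarith
    have hb2 : labs Fq (x 1 * pm) < Qd0 * Y2 := by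
      rw [labs_mul]
      calc X2 * labs Fq pm ≤ X2 * Bb :=
            mul_le_mul_of_nonneg_left hpm_le (le_of_lt hX2)
        _ = Bb * X2 := mul_comm _ _
        _ < Qd0 * Y2 := hBX
    have hb3 : labs Fq (pQ0 * (act Fq γ x 1 - y 1)) < Qd0 * Y2 := by
      rw [labs_mul]
      have h1 : Qd0 * labs Fq (act Fq γ x 1 - y 1) < Qd0 * ε := mul_lt_mul_of_pos_left hη1 hQd0
      have h2 : Qd0 * ε = X2 / Bb := by rw [hεdef]; field_simp
      have h3 : X2 / Bb ≤ X2 := div_le_self (le_of_lt hX2) hBb1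
      have h4 : X2 ≤ Bb * X2 := le_mul_of_one_le_left (le_of_lt hX2) hBb1
      linarith
    have hcontra : Qd0 * Y2 < Qd0 * Y2 := by
      calc Qd0 * Y2 = labs Fq (pQ0 * y 1) := by rw [labs_mul]
        _ = labs Fq ((x 1 * pc * δ0 + x 1 * pm) - pQ0 * (act Fq γ x 1 - y 1)) := by rw [← hfin]
        _ ≤ max (labs Fq (x 1 * pc * δ0 + x 1 * pm)) (labs Fq (pQ0 * (act Fq γ x 1 - y 1))) :=
            labs_sub_le Fq _ _
        _ < Qd0 * Y2 := by
            refine max_lt (lt_of_le_of_lt (labs_add_le Fq _ _) (max_lt hb1 hb2)) hb3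
    exact absurd hcontra (lt_irrefl _)
  · -- case t ≠ 0
    have hpt1 : 1 ≤ labs Fq pt := one_le_labs_polyToL Fq ht0
    have hptpos : 0 < labs Fq pt := lt_of_lt_of_le one_pos hpt1
    have hptQ1 : Qd1 ≤ labs Fq (pt * pQ1) := by
      rw [labs_mul]
      calc Qd1 = 1 * Qd1 := (one_mul _).symm
        _ ≤ labs Fq pt * Qd1 := mul_le_mul_of_nonneg_right hpt1 (le_of_lt hQd1)
        _ = labs Fq pt * labs Fq pQ1 := by rw [hQd1def]
    have hpe_lt' : labs Fq pe < labs Fq (pt * pQ1) := lt_of_lt_of_le hpe_lt hptQ1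
    have heq : labs Fq (ps * pQ0) = labs Fq (pt * pQ1) := by
      by_contra hne
      have h := labs_add_of_ne Fq hne
      rw [hseL] at h
      have h2 : labs Fq (pt * pQ1) ≤ labs Fq pe := h ▸ le_max_right _ _
      linarith
    have heq' : labs Fq ps * Qd0 = labs Fq pt * Qd1 := by
      have h1 := labs_mul Fq ps pQ0
      have h2 := labs_mul Fq pt pQ1
      rw [h1, h2] at heq
      exact heq
    have h1 : labs Fq (ps * δ0) = labs Fq pt / Qd0 := by
      have hps_eq : labs Fq ps = labs Fq pt * Qd1 / Qd0 := by
        rw [eq_div_iff (ne_of_gt hQd0)]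
        exact heq'
      rw [labs_mul, hδ0, hps_eq]
      rw [div_mul_eq_mul_div, mul_assoc, mul_inv_cancel₀ (ne_of_gt hQd1), mul_one]
    have h2 : labs Fq (pt * δ1) = labs Fq pt / Qd2 := by
      rw [labs_mul, hδ1, div_eq_mul_inv]
    have h3 : labs Fq (pt * δ1) < labs Fq (ps * δ0) := by
      rw [h1, h2]
      exact div_lt_div_of_pos_left hptpos hQd0 hQ02
    have h4 : labs Fq (ps * δ0 + pt * δ1) = labs Fq pt / Qd0 := by
      rw [labs_add_eq_left Fq h3, h1]
    rw [hW, labs_mul, h4] at est1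
    have h5 : X2 / Qd0 ≤ X2 * (labs Fq pt / Qd0) := by
      have h6 : X2 ≤ X2 * labs Fq pt := le_mul_of_one_le_right (le_of_lt hX2) hpt1
      calc X2 / Qd0 ≤ (X2 * labs Fq pt) / Qd0 := by gcongr
        _ = X2 * (labs Fq pt / Qd0) := by ring
    linarith

end
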